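/- Let f : (0, ∞) → ℂ be continuously differentiable, and suppose there exist constants a, b ∈ ℂ, K ≥ 0 and C > 0 such that f(t) − a − b·log t → 0 as t → ∞ and |f′(t) − b/t| ≤ K·t^{−1−C} for all t ≥ 1. Then for every ρ ∈ (0, 1) the integral ∫_1^∞ f′(t) t^{−ρ} dt converges absolutely, and lim_{ρ → 0⁺} ( ∫_1^∞ f′(t) t^{−ρ} dt − b/ρ ) = a − f(1). Equivalently, the constant term at ρ = 0 of the meromorphic function ρ ↦ −∫_1^∞ f′(t) t^{−ρ} dt is f(1) − a. -/

import Mathlib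

open MeasureTheory Set Filter Topology

/-- Regularization lemma: if `f : (0,∞) → ℂ` is C¹, `f(t) − a − b log t → 0` as `t → ∞`, and
`|f′(t) − b/t| ≤ K t^{−1−C}` for `t ≥ 1`, then for every `ρ ∈ (0,1)` the integral
`∫_1^∞ f′(t) t^{−ρ} dt` converges absolutely, and
`∫_1^∞ f′(t) t^{−ρ} dt − b/ρ → a − f(1)` as `ρ → 0⁺`. -/
theorem regularized_integral_constant_term (f f' : ℝ → ℂ) (a b : ℂ) (K C : ℝ)
    (hK : 0 ≤ K) (hC : 0 < C)
    (hderiv : ∀ t : ℝ, 0 < t → HasDerivAt f (f' t) t)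
    (hcont : ContinuousOn f' (Ioi 0))
    (hlim : Tendsto (fun t : ℝ => f t - a - b * (Real.log t : ℂ)) atTop (𝓝 0))
    (hbound : ∀ t : ℝ, 1 ≤ t → ‖f' t - b / (t : ℂ)‖ ≤ K * t ^ (-1 - C)) :
    (∀ ρ : ℝ, 0 < ρ → ρ < 1 →
        IntegrableOn (fun t : ℝ => f' t * ((t ^ (-ρ) : ℝ) : ℂ)) (Ioi 1) volume) ∧
      Tendsto (fun ρ : ℝ => (∫ t in Ioi (1 : ℝ), f' t * ((t ^ (-ρ) : ℝ) : ℂ)) - b / (ρ : ℂ))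
        (𝓝[>] 0) (𝓝 (a - f 1)) := by
  set g : ℝ → ℂ := fun t => f' t - b / (t : ℂ) with hg_def
  have hg_cont : ContinuousOn g (Ioi 0) := by
    apply hcont.sub
    apply ContinuousOn.div continuousOn_const Complex.continuous_ofReal.continuousOn
    intro t ht
    exact_mod_cast (ne_of_gt (show (0:ℝ) < t from ht))
  have hmeas : AEStronglyMeasurable g (volume.restrict (Ioi 1)) :=
    (hg_cont.mono (Ioi_subset_Ioi zero_le_one)).aestronglyMeasurable measurableSet_Ioi
  have hbound_int : IntegrableOn (fun t : ℝ => K * t ^ (-1 - C)) (Ioi 1) volume :=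
    (integrableOn_Ioi_rpow_of_lt (by linarith) one_pos).const_mul K
  -- measurability of the rpow factor
  have hXmeas : ∀ ρ : ℝ, AEStronglyMeasurable (fun t : ℝ => ((t ^ (-ρ) : ℝ) : ℂ))
      (volume.restrict (Ioi 1)) := by
    intro ρ
    apply ContinuousOn.aestronglyMeasurable _ measurableSet_Ioi
    apply Complex.continuous_ofReal.comp_continuousOn
    apply ContinuousOn.rpow_const continuousOn_id
    intro t ht
    exact Or.inl (ne_of_gt (lt_trans zero_lt_one ht))
  -- integrability of g · t^{-ρ} for all ρ ≥ 0
  have hgρ_int : ∀ ρ : ℝ, 0 ≤ ρ →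
      IntegrableOn (fun t : ℝ => g t * ((t ^ (-ρ) : ℝ) : ℂ)) (Ioi 1) volume := by
    intro ρ hρ
    apply Integrable.mono' hbound_int (hmeas.mul (hXmeas ρ))
    filter_upwards [ae_restrict_mem measurableSet_Ioi] with t ht
    simp only [Pi.mul_apply]
    have ht1 : (1:ℝ) ≤ t := le_of_lt ht
    have ht0 : (0:ℝ) < t := lt_trans zero_lt_one ht
    rw [norm_mul, Complex.norm_real, Real.norm_of_nonneg (Real.rpow_nonneg ht0.le _)]
    calc ‖g t‖ * t ^ (-ρ) ≤ (K * t ^ (-1 - C)) * 1 := by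
          apply mul_le_mul (hbound t ht1)
            (Real.rpow_le_one_of_one_le_of_nonpos ht1 (neg_nonpos.mpr hρ))
            (Real.rpow_nonneg ht0.le _) (by positivity)
      _ = K * t ^ (-1 - C) := mul_one _
  -- pointwise decomposition
  have key : ∀ ρ : ℝ, ∀ t ∈ Ioi (1:ℝ),
      f' t * ((t ^ (-ρ) : ℝ) : ℂ) = g t * ((t ^ (-ρ) : ℝ) : ℂ) + b * ((t ^ (-1 - ρ) : ℝ) : ℂ) := by
    intro ρ t ht
    have ht0 : (0:ℝ) < t := lt_trans zero_lt_one ht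
    have h1 : (t:ℝ) ^ (-1 - ρ) = t⁻¹ * t ^ (-ρ) := by
      rw [show (-1 - ρ) = (-1) + (-ρ) by ring, Real.rpow_add ht0, Real.rpow_neg_one]
    rw [h1, hg_def]
    push_cast
    rw [div_eq_mul_inv]
    ring
  -- integrability of b · t^{-1-ρ} for ρ > 0
  have hb_int : ∀ ρ : ℝ, 0 < ρ →
      IntegrableOn (fun t : ℝ => b * ((t ^ (-1 - ρ) : ℝ) : ℂ)) (Ioi 1) volume := by
    intro ρ hρ
    exact ((integrableOn_Ioi_rpow_of_lt (by linarith) one_pos).ofReal.const_mul b)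
  -- integrability of f' · t^{-ρ} for ρ > 0
  have hf'_int : ∀ ρ : ℝ, 0 < ρ →
      IntegrableOn (fun t : ℝ => f' t * ((t ^ (-ρ) : ℝ) : ℂ)) (Ioi 1) volume := by
    intro ρ hρ
    exact IntegrableOn.congr_fun ((hgρ_int ρ hρ.le).add (hb_int ρ hρ))
      (fun t ht => (key ρ t ht).symm) measurableSet_Ioi
  refine ⟨fun ρ hρ0 _ => hf'_int ρ hρ0, ?_⟩
  -- value of the b-part integral
  have hIρ : ∀ ρ : ℝ, 0 < ρ →
      (∫ t in Ioi (1:ℝ), f' t * ((t ^ (-ρ) : ℝ) : ℂ)) - b / (ρ : ℂ)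
        = ∫ t in Ioi (1:ℝ), g t * ((t ^ (-ρ) : ℝ) : ℂ) := by
    intro ρ hρ
    rw [setIntegral_congr_fun measurableSet_Ioi (key ρ),
      integral_add (hgρ_int ρ hρ.le) (hb_int ρ hρ), integral_const_mul]
    have h2 : (∫ t in Ioi (1:ℝ), ((t ^ (-1 - ρ) : ℝ) : ℂ)) = ((ρ⁻¹ : ℝ) : ℂ) := by
      rw [show (∫ t in Ioi (1:ℝ), ((t ^ (-1 - ρ) : ℝ) : ℂ))
          = ((∫ t in Ioi (1:ℝ), (t ^ (-1 - ρ) : ℝ) : ℝ) : ℂ) from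
        integral_ofReal (𝕜 := ℂ) (f := fun t : ℝ => t ^ (-1 - ρ)),
        integral_Ioi_rpow_of_lt (by linarith) one_pos]
      norm_num
      rw [show (-1 - (ρ:ℂ) + 1) = -(ρ:ℂ) by ring, neg_div_neg_eq]
      exact one_div _
    rw [h2]
    push_cast
    rw [div_eq_mul_inv]
    ring
  -- limit of ∫ g · t^{-ρ} as ρ → 0⁺
  have hconv : Tendsto (fun ρ : ℝ => ∫ t in Ioi (1:ℝ), g t * ((t ^ (-ρ) : ℝ) : ℂ))
      (𝓝[>] 0) (𝓝 (∫ t in Ioi (1:ℝ), g t)) := by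
    apply tendsto_integral_filter_of_dominated_convergence (fun t => K * t ^ (-1 - C))
    · exact Eventually.of_forall fun ρ => hmeas.mul (hXmeas ρ)
    · filter_upwards [self_mem_nhdsWithin] with ρ (hρ : 0 < ρ)
      filter_upwards [ae_restrict_mem measurableSet_Ioi] with t ht
      have ht1 : (1:ℝ) ≤ t := le_of_lt ht
      have ht0 : (0:ℝ) < t := lt_trans zero_lt_one ht
      rw [norm_mul, Complex.norm_real, Real.norm_of_nonneg (Real.rpow_nonneg ht0.le _)]
      calc ‖g t‖ * t ^ (-ρ) ≤ (K * t ^ (-1 - C)) * 1 := by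
            apply mul_le_mul (hbound t ht1)
              (Real.rpow_le_one_of_one_le_of_nonpos ht1 (neg_nonpos.mpr hρ.le))
              (Real.rpow_nonneg ht0.le _) (by positivity)
        _ = K * t ^ (-1 - C) := mul_one _
    · exact hbound_int
    · filter_upwards [ae_restrict_mem measurableSet_Ioi] with t ht
      have ht0 : (0:ℝ) < t := lt_trans zero_lt_one ht
      have h1 : Tendsto (fun ρ : ℝ => (t:ℝ) ^ (-ρ)) (𝓝 0) (𝓝 1) := by
        have hc : ContinuousAt (fun ρ : ℝ => (t:ℝ) ^ (-ρ)) 0 := by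
          simp only [Real.rpow_def_of_pos ht0]
          fun_prop
        simpa using hc.tendsto
      have h2 : Tendsto (fun ρ : ℝ => g t * ((t ^ (-ρ) : ℝ) : ℂ)) (𝓝 0) (𝓝 (g t)) := by
        have := (((Complex.continuous_ofReal.tendsto 1).comp h1).const_mul (g t))
        simpa using this
      exact h2.mono_left nhdsWithin_le_nhds
  -- value of ∫ g via FTC
  have hFderiv : ∀ x ∈ Ici (1:ℝ),
      HasDerivAt (fun t : ℝ => f t - b * ((Real.log t : ℝ) : ℂ)) (g x) x := by
    intro x hx
    have hx0 : (0:ℝ) < x := lt_of_lt_of_le zero_lt_one hx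
    have hlog : HasDerivAt (fun t : ℝ => ((Real.log t : ℝ) : ℂ)) ((x⁻¹ : ℝ) : ℂ) x :=
      (Real.hasDerivAt_log hx0.ne').ofReal_comp
    have h := (hderiv x hx0).sub (hlog.const_mul b)
    refine h.congr_deriv ?_
    rw [hg_def]
    push_cast
    rw [div_eq_mul_inv]
  have hFlim : Tendsto (fun t : ℝ => f t - b * ((Real.log t : ℝ) : ℂ)) atTop (𝓝 a) := by
    have h : Tendsto (fun t : ℝ => (f t - a - b * ((Real.log t : ℝ) : ℂ)) + a) atTop
        (𝓝 (0 + a)) := hlim.add tendsto_const_nhds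
    rw [zero_add] at h
    apply h.congr
    intro t
    ring
  have hgval : (∫ t in Ioi (1:ℝ), g t) = a - f 1 := by
    have hg_int : IntegrableOn g (Ioi 1) volume := by
      have := hgρ_int 0 le_rfl
      simpa using this
    have := integral_Ioi_of_hasDerivAt_of_tendsto' hFderiv hg_int hFlim
    simpa using this
  rw [hgval] at hconv
  apply hconv.congr'
  filter_upwards [self_mem_nhdsWithin] with ρ (hρ : 0 < ρ)
  exact (hIρ ρ hρ).symm
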